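/- Let U ⊆ ℂ be a nonempty, bounded, open, simply connected set, let K ⊆ U be compact, let ι be a type, and let g : ι → (ℂ → ℂ) be a family of functions each of which is holomorphic on U and maps U into K. Then for every sequence j : ℕ → ι, defining Ψ_n = g_{j(0)} ∘ g_{j(1)} ∘ ⋯ ∘ g_{j(n)}, the diameters of the sets Ψ_n(U) tend to 0 as n → ∞. -/

import Mathlib

open Filter Topology Set Metric

namespace Stmt11Aux

/-- The set of derivative norms at `z` of holomorphic maps `U → 𝔻`. -/
def caraS (U : Set ℂ) (z : ℂ) : Set ℝ :=
  {y | ∃ φ : ℂ → ℂ, DifferentiableOn ℂ φ U ∧ Set.MapsTo φ U (Metric.ball 0 1) ∧ y = ‖deriv φ z‖}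

/-- Carathéodory–Riffen–Finsler density of `U` at `z`. -/
noncomputable def cara (U : Set ℂ) (z : ℂ) : ℝ := sSup (caraS U z)

variable {U : Set ℂ} {R : ℝ} {z : ℂ}

lemma mem_caraS (hR : 0 ≤ R) (hUR : U ⊆ closedBall 0 R) (z : ℂ) :
    (R + 1)⁻¹ ∈ caraS U z := by
  refine ⟨fun w => w * ((R : ℂ) + 1)⁻¹, (differentiable_id.mul_const _).differentiableOn,
    fun w hw => ?_, ?_⟩
  · have hw' : ‖w‖ ≤ R := by simpa using mem_closedBall_zero_iff.1 (hUR hw)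
    have hR1 : ‖((R : ℂ) + 1)‖ = R + 1 := by
      have : ((R : ℂ) + 1) = ((R + 1 : ℝ) : ℂ) := by push_cast; ring
      rw [this, Complex.norm_real, Real.norm_eq_abs, abs_of_nonneg (by linarith)]
    have : ‖w * ((R : ℂ) + 1)⁻¹‖ < 1 := by
      rw [norm_mul, norm_inv, hR1]
      rw [mul_inv_lt_iff₀ (by linarith)]
      linarith
    simpa [Metric.mem_ball, Complex.dist_eq] using this
  · have : deriv (fun w : ℂ => w * ((R : ℂ) + 1)⁻¹) z = ((R : ℂ) + 1)⁻¹ := by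
      simpa using ((hasDerivAt_id z).mul_const (((R : ℂ) + 1)⁻¹)).deriv
    rw [this, norm_inv]
    have hR1 : ‖((R : ℂ) + 1)‖ = R + 1 := by
      have : ((R : ℂ) + 1) = ((R + 1 : ℝ) : ℂ) := by push_cast; ring
      rw [this, Complex.norm_real, Real.norm_eq_abs, abs_of_nonneg (by linarith)]
    rw [hR1]

lemma infDist_pos (hUo : IsOpen U) (hUc : Uᶜ.Nonempty) (hz : z ∈ U) :
    0 < infDist z Uᶜ :=
  ((hUo.isClosed_compl.notMem_iff_infDist_pos hUc).1 (by simpa using hz))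

lemma ball_infDist_subset (hz : z ∈ U) : ball z (infDist z Uᶜ) ⊆ U := by
  intro w hw
  by_contra hwU
  have h1 : infDist z Uᶜ ≤ dist z w := infDist_le_dist_of_mem (Set.mem_compl hwU)
  have h2 : dist z w < infDist z Uᶜ := by rwa [Metric.mem_ball, dist_comm] at hw
  exact absurd h1 (not_le.2 h2)

lemma caraS_le (hUo : IsOpen U) (hUc : Uᶜ.Nonempty) (hz : z ∈ U) :
    ∀ y ∈ caraS U z, y ≤ 2 / infDist z Uᶜ := by
  rintro y ⟨φ, hφd, hφm, rfl⟩
  have hdz : 0 < infDist z Uᶜ := infDist_pos hUo hUc hz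
  have hsub : ball z (infDist z Uᶜ) ⊆ U := ball_infDist_subset hz
  refine Complex.norm_deriv_le_div_of_mapsTo_ball (hφd.mono hsub) (fun w hw => ?_) hdz
  have h1 : φ w ∈ ball (0:ℂ) 1 := hφm (hsub hw)
  have h2 : φ z ∈ ball (0:ℂ) 1 := hφm hz
  have : dist (φ w) (φ z) < 2 := by
    calc dist (φ w) (φ z) ≤ dist (φ w) 0 + dist (φ z) 0 := dist_triangle_right _ _ _
    _ < 1 + 1 := add_lt_add (by simpa using h1) (by simpa using h2)
    _ = 2 := by norm_num
  simpa [Metric.mem_ball] using this.le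

lemma caraS_bddAbove (hUo : IsOpen U) (hUc : Uᶜ.Nonempty) (hz : z ∈ U) :
    BddAbove (caraS U z) :=
  ⟨_, caraS_le hUo hUc hz⟩

lemma cara_lb (hUo : IsOpen U) (hUc : Uᶜ.Nonempty) (hR : 0 ≤ R)
    (hUR : U ⊆ closedBall 0 R) (hz : z ∈ U) : (R + 1)⁻¹ ≤ cara U z :=
  le_csSup (caraS_bddAbove hUo hUc hz) (mem_caraS hR hUR z)

lemma cara_pos (hUo : IsOpen U) (hUc : Uᶜ.Nonempty) (hR : 0 ≤ R)
    (hUR : U ⊆ closedBall 0 R) (hz : z ∈ U) : 0 < cara U z :=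
  lt_of_lt_of_le (by positivity) (cara_lb hUo hUc hR hUR hz)

lemma cara_ub (hUo : IsOpen U) (hUc : Uᶜ.Nonempty) (hR : 0 ≤ R)
    (hUR : U ⊆ closedBall 0 R) (hz : z ∈ U) : cara U z ≤ 2 / infDist z Uᶜ :=
  csSup_le ⟨_, mem_caraS hR hUR z⟩ (caraS_le hUo hUc hz)

end Stmt11Aux

namespace Stmt11Aux
open Complex

variable {U : Set ℂ} {R : ℝ} {z : ℂ}

/-- Earle–Hamilton dilation trick: a holomorphic map of `U` into `K`, where the
`δ`-thickening of `K` lies in `U`, contracts the Carathéodory density. -/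
lemma EH (hUo : IsOpen U) (hUc : Uᶜ.Nonempty) (hR : 0 ≤ R) (hUR : U ⊆ closedBall 0 R)
    {K : Set ℂ} {δ t : ℝ} (hδ : 0 < δ) (ht : 0 < t)
    (htD : t * Metric.diam K < δ) (hKb : Bornology.IsBounded K)
    (hthick : Metric.thickening δ K ⊆ U)
    {h : ℂ → ℂ} (hh : DifferentiableOn ℂ h U) (hhK : Set.MapsTo h U K)
    {z : ℂ} (hz : z ∈ U) :
    (1 + t) * (‖deriv h z‖ * cara U (h z)) ≤ cara U z := by
  have hKU : K ⊆ U := (Metric.self_subset_thickening hδ K).trans hthick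
  have hzU : h z ∈ U := hKU (hhK hz)
  set c : ℂ := ((t : ℝ) : ℂ) with hc
  have hnc : ‖c‖ = t := by rw [hc, Complex.norm_real, Real.norm_eq_abs, abs_of_pos ht]
  set G : ℂ → ℂ := fun w => h w + c * (h w - h z) with hG
  have hGU : Set.MapsTo G U U := by
    intro w hw
    have hd : dist (G w) (h w) < δ := by
      have : G w - h w = c * (h w - h z) := by rw [hG]; ring
      rw [dist_eq_norm, this, norm_mul, hnc]
      calc t * ‖h w - h z‖ ≤ t * Metric.diam K := by
            have := Metric.dist_le_diam_of_mem hKb (hhK hw) (hhK hz)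
            rw [dist_eq_norm] at this
            exact mul_le_mul_of_nonneg_left this ht.le
        _ < δ := htD
    refine hthick ?_
    rw [Metric.mem_thickening_iff]
    exact ⟨h w, hhK hw, hd⟩
  have hGd : DifferentiableOn ℂ G U := by
    apply hh.add
    exact ((hh.sub_const _).const_mul _)
  have hGz : G z = h z := by rw [hG]; ring_nf
  have key : ∀ y ∈ caraS U (h z), (1 + t) * ‖deriv h z‖ * y ≤ cara U z := by
    rintro y ⟨φ, hφd, hφm, rfl⟩
    have hh' : HasDerivAt h (deriv h z) z := (hh.differentiableAt (hUo.mem_nhds hz)).hasDerivAt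
    have hG' : HasDerivAt G ((1 + c) * deriv h z) z := by
      have := hh'.add (((hh'.sub_const (h z)).const_mul c))
      exact this.congr_deriv (by ring)
    have hφ' : HasDerivAt φ (deriv φ (h z)) (G z) := by
      rw [hGz]
      exact (hφd.differentiableAt (hUo.mem_nhds hzU)).hasDerivAt
    have hψ' : HasDerivAt (φ ∘ G) (deriv φ (h z) * ((1 + c) * deriv h z)) z := hφ'.comp z hG'
    have hmem : ‖deriv (φ ∘ G) z‖ ∈ caraS U z :=
      ⟨φ ∘ G, hφd.comp hGd hGU, hφm.comp hGU, rfl⟩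
    have hle : ‖deriv (φ ∘ G) z‖ ≤ cara U z :=
      le_csSup (caraS_bddAbove hUo hUc hz) hmem
    have hnorm : ‖deriv (φ ∘ G) z‖ = (1 + t) * ‖deriv h z‖ * ‖deriv φ (h z)‖ := by
      rw [hψ'.deriv, norm_mul, norm_mul]
      have : ‖(1 : ℂ) + c‖ = 1 + t := by
        rw [hc]
        have : (1 : ℂ) + ((t:ℝ):ℂ) = (((1 + t : ℝ)) : ℂ) := by push_cast; ring
        rw [this, Complex.norm_real, Real.norm_eq_abs, abs_of_pos (by linarith)]
      rw [this]; ring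
    rw [hnorm] at hle
    exact hle
  rcases eq_or_ne (deriv h z) 0 with hd0 | hd0
  · rw [hd0]
    simp only [norm_zero, zero_mul, mul_zero]
    exact (cara_pos hUo hUc hR hUR hz).le
  · have hcpos : 0 < (1 + t) * ‖deriv h z‖ := by
      have : 0 < ‖deriv h z‖ := norm_pos_iff.2 hd0
      positivity
    have : cara U (h z) ≤ cara U z / ((1 + t) * ‖deriv h z‖) := by
      refine csSup_le ⟨_, mem_caraS hR hUR (h z)⟩ fun y hy => ?_
      rw [le_div_iff₀ hcpos]
      calc y * ((1 + t) * ‖deriv h z‖) = (1 + t) * ‖deriv h z‖ * y := by ring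
        _ ≤ cara U z := key y hy
    calc (1 + t) * (‖deriv h z‖ * cara U (h z))
        = ((1 + t) * ‖deriv h z‖) * cara U (h z) := by ring
      _ ≤ ((1 + t) * ‖deriv h z‖) * (cara U z / ((1 + t) * ‖deriv h z‖)) :=
          mul_le_mul_of_nonneg_left this hcpos.le
      _ = cara U z := mul_div_cancel₀ _ hcpos.ne'

end Stmt11Aux

namespace Stmt11Aux

/-- Points at distance at least `η` from the complement of `U`. -/
def SafeSet (U : Set ℂ) (η : ℝ) : Set ℂ := {z | η ≤ Metric.infDist z Uᶜ}

/-- A polygonal chain from `u` to `v` of total length at most `C`, all of whose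
segments stay `η`-deep inside `U`. -/
def HasChain (U : Set ℂ) (η C : ℝ) (u v : ℂ) : Prop :=
  ∃ (m : ℕ) (w : ℕ → ℂ), w 0 = u ∧ w m = v ∧
    (∀ i < m, segment ℝ (w i) (w (i + 1)) ⊆ SafeSet U η) ∧
    ∑ i ∈ Finset.range m, dist (w i) (w (i + 1)) ≤ C

variable {U : Set ℂ} {η η' C C₁ C₂ C' : ℝ} {u v x : ℂ}

lemma SafeSet.subset (hη : 0 < η) : SafeSet U η ⊆ U := by
  intro z hz
  by_contra hzU
  have : Metric.infDist z Uᶜ = 0 := Metric.infDist_zero_of_mem (Set.mem_compl hzU)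
  rw [SafeSet, Set.mem_setOf_eq, this] at hz
  linarith

lemma HasChain.mono (hη : η' ≤ η) (hC : C ≤ C') (h : HasChain U η C u v) :
    HasChain U η' C' u v := by
  obtain ⟨m, w, h0, hm, hseg, hsum⟩ := h
  exact ⟨m, w, h0, hm, fun i hi => (hseg i hi).trans fun z hz => le_trans hη hz,
    hsum.trans hC⟩

lemma HasChain.single (hseg : segment ℝ u v ⊆ SafeSet U η) :
    HasChain U η (dist u v) u v := by
  refine ⟨1, fun i => if i = 0 then u else v, by simp, by simp, ?_, by simp⟩
  intro i hi
  interval_cases i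
  simpa using hseg

lemma HasChain.trans (h1 : HasChain U η C₁ u v) (h2 : HasChain U η C₂ v x) :
    HasChain U η (C₁ + C₂) u x := by
  obtain ⟨m₁, w₁, h10, h1m, h1seg, h1sum⟩ := h1
  obtain ⟨m₂, w₂, h20, h2m, h2seg, h2sum⟩ := h2
  set w : ℕ → ℂ := fun i => if i < m₁ then w₁ i else w₂ (i - m₁) with hw
  have haux : ∀ i ≤ m₁, w i = w₁ i := by
    intro i hi
    rcases lt_or_eq_of_le hi with h | h
    · simp [hw, h]
    · subst h
      simp [hw, h20, ← h1m]
  have haux2 : ∀ i, w (m₁ + i) = w₂ i := by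
    intro i
    have : ¬ (m₁ + i < m₁) := by omega
    simp [hw, this]
  refine ⟨m₁ + m₂, w, ?_, ?_, ?_, ?_⟩
  · rw [haux 0 (Nat.zero_le _), h10]
  · rw [haux2 m₂, h2m]
  · intro i hi
    rcases Nat.lt_or_ge i m₁ with h | h
    · rw [haux i h.le, haux (i + 1) h]
      exact h1seg i h
    · obtain ⟨k, rfl⟩ := Nat.exists_eq_add_of_le h
      have hk : k < m₂ := by omega
      rw [haux2 k, show m₁ + k + 1 = m₁ + (k + 1) from rfl, haux2 (k + 1)]
      exact h2seg k hk
  · rw [Finset.sum_range_add]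
    refine add_le_add (le_trans (le_of_eq ?_) h1sum) (le_trans (le_of_eq ?_) h2sum)
    · refine Finset.sum_congr rfl fun i hi => ?_
      rw [Finset.mem_range] at hi
      rw [haux i hi.le, haux (i + 1) hi]
    · refine Finset.sum_congr rfl fun i hi => ?_
      rw [haux2 i, show m₁ + i + 1 = m₁ + (i + 1) from rfl, haux2 (i + 1)]

end Stmt11Aux

namespace Stmt11Aux

variable {U : Set ℂ} {η C a b : ℝ} {u v p q : ℂ}

lemma seg_safe (ha : a ≤ Metric.infDist p Uᶜ) (hb : dist p q ≤ b) :
    segment ℝ p q ⊆ SafeSet U (a - b) := by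
  intro z hz
  have hzb : z ∈ Metric.closedBall p (dist p q) :=
    (convex_closedBall p (dist p q)).segment_subset
      (Metric.mem_closedBall_self dist_nonneg)
      (by simp [Metric.mem_closedBall, dist_comm]) hz
  have hdzp : dist p z ≤ b := by
    rw [Metric.mem_closedBall] at hzb
    rw [dist_comm]
    exact hzb.trans hb
  have : Metric.infDist p Uᶜ ≤ Metric.infDist z Uᶜ + dist p z :=
    Metric.infDist_le_infDist_add_dist
  simp only [SafeSet, Set.mem_setOf_eq]
  linarith

lemma chain_of_joined (hUo : IsOpen U) (hUc : Uᶜ.Nonempty) (hj : JoinedIn U u v) :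
    ∃ η > 0, ∃ C ≥ 0, HasChain U η C u v := by
  obtain ⟨γ, hγU⟩ := hj
  have hext : ∀ s : ℝ, γ.extend s ∈ U := by
    intro s
    have : γ.extend s ∈ Set.range γ := by
      rw [← Path.extend_range γ]
      exact Set.mem_range_self s
    obtain ⟨t0, ht0⟩ := this
    exact ht0 ▸ hγU t0
  set E : Set ℂ := γ.extend '' Set.Icc (0 : ℝ) 1 with hE
  have hEc : IsCompact E := isCompact_Icc.image γ.continuous_extend
  have hEne : E.Nonempty := ⟨γ.extend 0, ⟨0, by simp, rfl⟩⟩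
  obtain ⟨z₀, hz₀E, hz₀min⟩ :=
    hEc.exists_isMinOn hEne (Metric.continuous_infDist_pt Uᶜ).continuousOn
  have hz₀U : z₀ ∈ U := by
    obtain ⟨s, _, rfl⟩ := hz₀E
    exact hext s
  set ε₀ : ℝ := Metric.infDist z₀ Uᶜ with hε₀
  have hε₀pos : 0 < ε₀ := infDist_pos hUo hUc hz₀U
  set δ' : ℝ := ε₀ / 2 with hδ'
  have hδ'pos : 0 < δ' := by positivity
  have huc : UniformContinuousOn γ.extend (Set.Icc (0:ℝ) 1) :=
    isCompact_Icc.uniformContinuousOn_of_continuous γ.continuous_extend.continuousOn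
  obtain ⟨d, hd, hducont⟩ := Metric.uniformContinuousOn_iff.1 huc δ' hδ'pos
  obtain ⟨n, hnposn, h1n⟩ : ∃ n : ℕ, 0 < n ∧ 1 / (n:ℝ) < d := by
    obtain ⟨n', hn'⟩ := exists_nat_one_div_lt hd
    exact ⟨n' + 1, Nat.succ_pos _, by push_cast; exact hn'⟩
  have hnpos : (0:ℝ) < n := by exact_mod_cast hnposn
  set w : ℕ → ℂ := fun i => γ.extend (i / n) with hw
  have hmemIcc : ∀ i : ℕ, i ≤ n → (i / n : ℝ) ∈ Set.Icc (0:ℝ) 1 := by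
    intro i hi
    constructor
    · positivity
    · rw [div_le_one hnpos]
      exact_mod_cast hi
  have hwE : ∀ i : ℕ, i ≤ n → w i ∈ E := fun i hi => ⟨i / n, hmemIcc i hi, rfl⟩
  have hstep : ∀ i : ℕ, i < n → dist (w i) (w (i + 1)) < δ' := by
    intro i hi
    refine hducont _ (hmemIcc i hi.le) _ (hmemIcc (i + 1) hi) ?_
    have heq : ((i : ℝ)) / n - ((i : ℝ) + 1) / n = -(1 / n) := by
      field_simp
      ring
    have : dist ((i : ℝ) / n) (((i : ℕ) + 1 : ℕ) / n : ℝ) = 1 / n := by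
      rw [Real.dist_eq, Nat.cast_add, Nat.cast_one, heq, abs_neg, abs_of_pos (by positivity)]
    rw [this]
    exact h1n
  refine ⟨δ', hδ'pos, n * δ', by positivity, n, w, ?_, ?_, ?_, ?_⟩
  · simp [hw]
  · have : ((n : ℝ) / n) = 1 := div_self hnpos.ne'
    simp [hw, this]
  · intro i hi
    have h1 : 2 * δ' ≤ Metric.infDist (w i) Uᶜ := by
      have h' : ε₀ ≤ Metric.infDist (w i) Uᶜ := hz₀min (hwE i hi.le)
      have h2 : 2 * δ' = ε₀ := by rw [hδ']; ring
      linarith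
    have h2 : dist (w i) (w (i + 1)) ≤ δ' := (hstep i hi).le
    have := seg_safe (U := U) h1 h2
    simpa [show 2 * δ' - δ' = δ' by ring] using this
  · calc ∑ i ∈ Finset.range n, dist (w i) (w (i + 1))
        ≤ (Finset.range n).card • δ' :=
          Finset.sum_le_card_nsmul _ _ _ fun i hi =>
            (hstep i (Finset.mem_range.1 hi)).le
      _ = n * δ' := by simp [nsmul_eq_mul]

end Stmt11Aux

namespace Stmt11Aux

variable {U : Set ℂ} {δ : ℝ}

lemma infDist_of_thickening {K : Set ℂ} (hδ : 0 < δ) (hthick : Metric.thickening δ K ⊆ U)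
    (hUc : Uᶜ.Nonempty) {k : ℂ} (hk : k ∈ K) : δ ≤ Metric.infDist k Uᶜ := by
  by_contra hlt
  rw [not_le] at hlt
  obtain ⟨y, hyU, hyd⟩ := (Metric.infDist_lt_iff hUc).1 hlt
  have : y ∈ Metric.thickening δ K := Metric.mem_thickening_iff.2 ⟨k, hk, by rwa [dist_comm]⟩
  exact hyU (hthick this)

lemma uniform_chain (hUo : IsOpen U) (hUc : Uᶜ.Nonempty) {K : Set ℂ}
    (hK : IsCompact K) (hKne : K.Nonempty) (hKU : K ⊆ U)
    (hδ : 0 < δ) (hthick : Metric.thickening δ K ⊆ U) (hpath : IsPathConnected U) :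
    ∃ η > 0, ∃ C ≥ 0, ∀ u ∈ K, ∀ v ∈ K, HasChain U η C u v := by
  obtain ⟨F, hFK, hFcov⟩ := hK.elim_nhds_subcover (fun x => Metric.ball x (δ / 4))
    (fun x _ => Metric.ball_mem_nhds x (by linarith))
  have hFne : F.Nonempty := by
    obtain ⟨k, hk⟩ := hKne
    obtain ⟨c, hc⟩ := Set.mem_iUnion₂.1 (hFcov hk)
    exact ⟨c, hc.1⟩
  have hFF : (F ×ˢ F).Nonempty := hFne.product hFne
  have hchoice : ∀ p : ℂ × ℂ, ∃ r : ℝ × ℝ,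
      p ∈ F ×ˢ F → 0 < r.1 ∧ 0 ≤ r.2 ∧ HasChain U r.1 r.2 p.1 p.2 := by
    intro p
    by_cases hp : p ∈ F ×ˢ F
    · rw [Finset.mem_product] at hp
      have hj : JoinedIn U p.1 p.2 :=
        hpath.joinedIn p.1 (hKU (hFK _ hp.1)) p.2 (hKU (hFK _ hp.2))
      obtain ⟨η, hη, C, hC, hchain⟩ := chain_of_joined hUo hUc hj
      exact ⟨(η, C), fun _ => ⟨hη, hC, hchain⟩⟩
    · exact ⟨(1, 0), fun h => absurd h hp⟩
  choose r hr using hchoice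
  set η : ℝ := min (δ / 2) ((F ×ˢ F).inf' hFF fun p => (r p).1) with hη
  set C₀ : ℝ := (F ×ˢ F).sup' hFF fun p => (r p).2 with hC₀
  have hηpos : 0 < η := by
    rw [hη, lt_min_iff]
    refine ⟨by linarith, ?_⟩
    rw [Finset.lt_inf'_iff]
    exact fun p hp => (hr p hp).1
  have hC₀nonneg : 0 ≤ C₀ := by
    obtain ⟨p₀, hp₀⟩ := hFF
    refine le_trans (hr p₀ hp₀).2.1 ?_
    rw [hC₀]
    exact Finset.le_sup' (fun p => (r p).2) hp₀
  refine ⟨η, hηpos, δ / 4 + (C₀ + δ / 4), by linarith, ?_⟩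
  intro u hu v hv
  obtain ⟨c, hcmem⟩ := Set.mem_iUnion₂.1 (hFcov hu)
  obtain ⟨c', hc'mem⟩ := Set.mem_iUnion₂.1 (hFcov hv)
  obtain ⟨hcF, hcball⟩ := hcmem
  obtain ⟨hc'F, hc'ball⟩ := hc'mem
  -- chain from u to c
  have hchain1 : HasChain U η (δ / 4) u c := by
    have hseg : segment ℝ u c ⊆ SafeSet U (δ - δ / 4) :=
      seg_safe (infDist_of_thickening hδ hthick hUc hu)
        (by rw [Metric.mem_ball] at hcball; exact hcball.le)
    refine (HasChain.single ((fun z hz => ?_) : segment ℝ u c ⊆ SafeSet U η)).mono le_rfl ?_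
    · have := hseg hz
      simp only [SafeSet, Set.mem_setOf_eq] at this ⊢
      have : η ≤ δ - δ / 4 := by
        rw [hη]
        refine (min_le_left _ _).trans (by linarith)
      linarith [hseg hz]
    · rw [Metric.mem_ball] at hcball
      exact hcball.le
  -- chain from c to c'
  have hp : (c, c') ∈ F ×ˢ F := Finset.mem_product.2 ⟨hcF, hc'F⟩
  have hchain2 : HasChain U η C₀ c c' := by
    refine ((hr (c, c') hp).2.2).mono ?_ (by rw [hC₀]; exact Finset.le_sup' (fun p => (r p).2) hp)
    rw [hη]
    exact (min_le_right _ _).trans (Finset.inf'_le _ hp)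
  -- chain from c' to v
  have hchain3 : HasChain U η (δ / 4) c' v := by
    have hc'K : c' ∈ K := hFK _ hc'F
    have hseg : segment ℝ c' v ⊆ SafeSet U (δ - δ / 4) :=
      seg_safe (infDist_of_thickening hδ hthick hUc hc'K)
        (by rw [Metric.mem_ball] at hc'ball; rw [dist_comm]; exact hc'ball.le)
    refine (HasChain.single ((fun z hz => ?_) : segment ℝ c' v ⊆ SafeSet U η)).mono le_rfl ?_
    · simp only [SafeSet, Set.mem_setOf_eq]
      have hη4 : η ≤ δ - δ / 4 := by
        rw [hη]
        refine (min_le_left _ _).trans (by linarith)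
      have := hseg hz
      simp only [SafeSet, Set.mem_setOf_eq] at this
      linarith
    · rw [Metric.mem_ball] at hc'ball
      rw [dist_comm]
      exact hc'ball.le
  exact hchain1.trans (hchain2.trans hchain3)

end Stmt11Aux


namespace Stmt11Aux

open Filter Topology Set Metric

/-- Norm of the complex Fréchet derivative equals the norm of `deriv`. -/
lemma norm_fderiv_eq_norm_deriv (f : ℂ → ℂ) (x : ℂ) : ‖fderiv ℂ f x‖ = ‖deriv f x‖ := by
  rw [← toSpanSingleton_deriv, ContinuousLinearMap.norm_toSpanSingleton]

end Stmt11Aux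




open Filter Topology
open Stmt11Aux

/-- Uniform contraction of compositions of inverse branches: if each g_i is
holomorphic on U and maps U into a compact subset K of U, then the diameters of
the images of U under the compositions Ψ_n = g_{j 0} ∘ ⋯ ∘ g_{j n} tend to 0. -/
theorem stmt11 (U : Set ℂ) (hUne : U.Nonempty) (hUb : Bornology.IsBounded U)
    (hUo : IsOpen U) (hUsc : SimplyConnectedSpace U)
    (K : Set ℂ) (hK : IsCompact K) (hKU : K ⊆ U)
    (ι : Type*) (g : ι → ℂ → ℂ)
    (hg : ∀ i, DifferentiableOn ℂ (g i) U) (hgK : ∀ i, g i '' U ⊆ K)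
    (j : ℕ → ι) (Ψ : ℕ → ℂ → ℂ)
    (hΨ0 : Ψ 0 = g (j 0)) (hΨ : ∀ n : ℕ, Ψ (n + 1) = Ψ n ∘ g (j (n + 1))) :
    Tendsto (fun n => Metric.diam (Ψ n '' U)) atTop (𝓝 0) := by
  classical
  -- basic setup
  obtain ⟨R, hUR⟩ := hUb.subset_closedBall 0
  have hR0 : 0 ≤ R := by
    obtain ⟨x, hx⟩ := hUne
    exact le_trans (norm_nonneg x) (by simpa using mem_closedBall_zero_iff.1 (hUR hx))
  have hUcne : Uᶜ.Nonempty := by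
    by_contra h
    rw [Set.not_nonempty_iff_eq_empty, Set.compl_empty_iff] at h
    have : ((R + 1 : ℝ) : ℂ) ∈ U := h ▸ Set.mem_univ _
    have hle : ‖((R + 1 : ℝ) : ℂ)‖ ≤ R := mem_closedBall_zero_iff.1 (hUR this)
    rw [Complex.norm_real, Real.norm_eq_abs, abs_of_nonneg (by linarith)] at hle
    linarith
  obtain ⟨x₀, hx₀⟩ := hUne
  have hKne : K.Nonempty := ⟨g (j 0) x₀, hgK (j 0) ⟨x₀, hx₀, rfl⟩⟩
  obtain ⟨δ, hδpos, hthick⟩ := hK.exists_thickening_subset_open hUo hKU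
  set D : ℝ := Metric.diam K with hD
  have hD0 : 0 ≤ D := Metric.diam_nonneg
  set t : ℝ := δ / (2 * (D + 1)) with ht
  have htpos : 0 < t := by positivity
  have htD : t * D < δ := by
    rw [ht, div_mul_eq_mul_div, div_lt_iff₀ (by positivity)]
    nlinarith
  have hgU : ∀ i, Set.MapsTo (g i) U U := fun i w hw => hKU (hgK i ⟨w, hw, rfl⟩)
  have hgKm : ∀ i, Set.MapsTo (g i) U K := fun i w hw => hgK i ⟨w, hw, rfl⟩
  have hEH : ∀ (i : ι) {z : ℂ}, z ∈ U →
      (1 + t) * (‖deriv (g i) z‖ * cara U (g i z)) ≤ cara U z :=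
    fun i z hz =>
      EH hUo hUcne hR0 hUR hδpos htpos htD hK.isBounded hthick (hg i) (hgKm i) hz
  -- main induction: contraction of the Carathéodory density along compositions
  have hmain : ∀ n, DifferentiableOn ℂ (Ψ n) U ∧ Set.MapsTo (Ψ n) U K ∧
      ∀ z ∈ U, (1 + t) ^ (n + 1) * (‖deriv (Ψ n) z‖ * cara U (Ψ n z)) ≤ cara U z := by
    intro n
    induction n with
    | zero =>
      rw [hΨ0]
      exact ⟨hg _, hgKm _, fun z hz => by simpa using hEH (j 0) hz⟩
    | succ n ih =>
      obtain ⟨ihd, ihm, ihb⟩ := ih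
      rw [hΨ n]
      refine ⟨ihd.comp (hg _) (hgU _), ihm.comp (hgU _), ?_⟩
      intro z hz
      set i := j (n + 1)
      have hgz : g i z ∈ U := hgU i hz
      have hg' : HasDerivAt (g i) (deriv (g i) z) z :=
        ((hg i).differentiableAt (hUo.mem_nhds hz)).hasDerivAt
      have hΨ' : HasDerivAt (Ψ n) (deriv (Ψ n) (g i z)) (g i z) :=
        (ihd.differentiableAt (hUo.mem_nhds hgz)).hasDerivAt
      have hcomp : HasDerivAt (Ψ n ∘ g i)
          (deriv (Ψ n) (g i z) * deriv (g i) z) z := hΨ'.comp z hg'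
      have hderiv_eq : deriv (Ψ n ∘ g i) z = deriv (Ψ n) (g i z) * deriv (g i) z :=
        hcomp.deriv
      have hval : (Ψ n ∘ g i) z = Ψ n (g i z) := rfl
      rw [hderiv_eq, hval, norm_mul]
      have h1 := ihb (g i z) hgz
      have h2 := hEH i hz
      have hBnonneg : 0 ≤ (1 + t) * ‖deriv (g i) z‖ := by positivity
      calc (1 + t) ^ (n + 1 + 1) *
            (‖deriv (Ψ n) (g i z)‖ * ‖deriv (g i) z‖ * cara U (Ψ n (g i z)))
          = ((1 + t) ^ (n + 1) * (‖deriv (Ψ n) (g i z)‖ * cara U (Ψ n (g i z)))) *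
            ((1 + t) * ‖deriv (g i) z‖) := by ring
        _ ≤ cara U (g i z) * ((1 + t) * ‖deriv (g i) z‖) :=
            mul_le_mul_of_nonneg_right h1 hBnonneg
        _ = (1 + t) * (‖deriv (g i) z‖ * cara U (g i z)) := by ring
        _ ≤ cara U z := h2
  -- derivative bound on points deep inside U
  have hderivbound : ∀ (n : ℕ) {z : ℂ} {η : ℝ}, 0 < η → η ≤ Metric.infDist z Uᶜ →
      ‖deriv (Ψ n) z‖ ≤ (R + 1) * (2 / η) * ((1 + t)⁻¹) ^ (n + 1) := by
    intro n z η hη hzη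
    have hzU : z ∈ U := SafeSet.subset hη hzη
    have hΨnz : Ψ n z ∈ U := hKU ((hmain n).2.1 hzU)
    have hb := (hmain n).2.2 z hzU
    have hlb : (R + 1)⁻¹ ≤ cara U (Ψ n z) := cara_lb hUo hUcne hR0 hUR hΨnz
    have hub : cara U z ≤ 2 / η := by
      refine (cara_ub hUo hUcne hR0 hUR hzU).trans ?_
      have hpos : 0 < Metric.infDist z Uᶜ := lt_of_lt_of_le hη hzη
      exact div_le_div_of_nonneg_left (by norm_num) hη hzη
    have hpow : (0:ℝ) < (1 + t) ^ (n + 1) := by positivity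
    have step : (1 + t) ^ (n + 1) * (‖deriv (Ψ n) z‖ * (R + 1)⁻¹) ≤ 2 / η := by
      refine le_trans ?_ (hb.trans hub)
      have : ‖deriv (Ψ n) z‖ * (R + 1)⁻¹ ≤ ‖deriv (Ψ n) z‖ * cara U (Ψ n z) :=
        mul_le_mul_of_nonneg_left hlb (norm_nonneg _)
      exact mul_le_mul_of_nonneg_left this hpow.le
    have hR1 : (0:ℝ) < R + 1 := by linarith
    calc ‖deriv (Ψ n) z‖
        = ((1 + t) ^ (n + 1) * (‖deriv (Ψ n) z‖ * (R + 1)⁻¹)) * (R + 1) *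
            ((1 + t)⁻¹) ^ (n + 1) := by
          rw [inv_pow]
          field_simp
        _ ≤ (2 / η) * (R + 1) * ((1 + t)⁻¹) ^ (n + 1) := by
          have h1 : (0:ℝ) ≤ ((1 + t)⁻¹) ^ (n + 1) := by positivity
          exact mul_le_mul_of_nonneg_right
            (mul_le_mul_of_nonneg_right step hR1.le) h1
        _ = (R + 1) * (2 / η) * ((1 + t)⁻¹) ^ (n + 1) := by ring
  -- uniform chains in K
  have hpathU : IsPathConnected U := by
    rw [isPathConnected_iff_pathConnectedSpace]
    infer_instance
  obtain ⟨η, hηpos, C, hCnonneg, hchain⟩ :=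
    uniform_chain hUo hUcne hK hKne hKU hδpos hthick hpathU
  -- distance bound on K
  have hKdist : ∀ (n : ℕ), ∀ u ∈ K, ∀ v ∈ K,
      dist (Ψ n u) (Ψ n v) ≤ (R + 1) * (2 / η) * ((1 + t)⁻¹) ^ (n + 1) * C := by
    intro n u hu v hv
    obtain ⟨m, w, hw0, hwm, hseg, hsum⟩ := hchain u hu v hv
    set B : ℝ := (R + 1) * (2 / η) * ((1 + t)⁻¹) ^ (n + 1) with hB
    have hBnn : 0 ≤ B := by positivity
    have hMVT : ∀ i < m, dist (Ψ n (w i)) (Ψ n (w (i + 1))) ≤ B * dist (w i) (w (i + 1)) := by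
      intro i hi
      have hsub := hseg i hi
      have hdiffat : ∀ x ∈ segment ℝ (w i) (w (i + 1)), DifferentiableAt ℂ (Ψ n) x :=
        fun x hx => (hmain n).1.differentiableAt (hUo.mem_nhds (SafeSet.subset hηpos (hsub hx)))
      have hbnd : ∀ x ∈ segment ℝ (w i) (w (i + 1)), ‖fderiv ℂ (Ψ n) x‖ ≤ B := by
        intro x hx
        rw [norm_fderiv_eq_norm_deriv]
        exact hderivbound n hηpos (hsub hx)
      have hmvt := (convex_segment (w i) (w (i + 1))).norm_image_sub_le_of_norm_fderiv_le
        hdiffat hbnd (right_mem_segment ℝ _ _) (left_mem_segment ℝ _ _)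
      rw [dist_eq_norm, dist_eq_norm]
      exact hmvt
    calc dist (Ψ n u) (Ψ n v)
        = dist ((fun k => Ψ n (w k)) 0) ((fun k => Ψ n (w k)) m) := by
          simp only [← hw0, ← hwm]
      _ ≤ ∑ i ∈ Finset.range m, dist (Ψ n (w i)) (Ψ n (w (i + 1))) :=
          dist_le_range_sum_dist (fun k => Ψ n (w k)) m
      _ ≤ ∑ i ∈ Finset.range m, B * dist (w i) (w (i + 1)) :=
          Finset.sum_le_sum fun i hi => hMVT i (Finset.mem_range.1 hi)
      _ = B * ∑ i ∈ Finset.range m, dist (w i) (w (i + 1)) := by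
          rw [Finset.mul_sum]
      _ ≤ B * C := mul_le_mul_of_nonneg_left hsum hBnn
  -- diameter bound
  have hdiam : ∀ n : ℕ, Metric.diam (Ψ (n + 1) '' U) ≤
      ((R + 1) * (2 / η) * C) * ((1 + t)⁻¹) ^ (n + 1) := by
    intro n
    refine Metric.diam_le_of_forall_dist_le (by positivity) ?_
    rintro p ⟨x, hx, rfl⟩ q ⟨y, hy, rfl⟩
    rw [hΨ n]
    simp only [Function.comp_apply]
    have := hKdist n (g (j (n + 1)) x) (hgKm _ hx) (g (j (n + 1)) y) (hgKm _ hy)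
    calc dist (Ψ n (g (j (n + 1)) x)) (Ψ n (g (j (n + 1)) y))
        ≤ (R + 1) * (2 / η) * ((1 + t)⁻¹) ^ (n + 1) * C := this
      _ = ((R + 1) * (2 / η) * C) * ((1 + t)⁻¹) ^ (n + 1) := by ring
  -- squeeze
  have hr0 : (0:ℝ) ≤ (1 + t)⁻¹ := by positivity
  have hr1 : (1 + t)⁻¹ < 1 := by
    rw [inv_lt_one_iff₀]
    right
    linarith
  refine squeeze_zero' (g := fun n => ((R + 1) * (2 / η) * C) * ((1 + t)⁻¹) ^ n)
    (Filter.Eventually.of_forall fun n => Metric.diam_nonneg) ?_ ?_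
  · rw [Filter.eventually_atTop]
    refine ⟨1, fun n hn => ?_⟩
    match n, hn with
    | (m + 1), _ => exact hdiam m
  · have := (tendsto_pow_atTop_nhds_zero_of_lt_one hr0 hr1).const_mul
      ((R + 1) * (2 / η) * C)
    simpa using this
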